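/- Let ε_c, ε_s ≥ 0. Suppose that for a family of states ρ^fin_{ABE|N} (classical on systems A, B with values in {0,1}^N) and ideal states ρ^ideal_{ABE|N} := 2^{-N} Σ_{k∈{0,1}^N} |k,k⟩⟨k,k|_{AB} ⊗ tr_{AB}(ρ^fin_{ABE|N}), the correctness condition Σ_N Pr[N]·Pr[k_A ≠ k_B | N] ≤ ε_c and the secrecy condition (1/2) Σ_N Pr[N] ‖tr_B ρ^fin_{ABE|N} − tr_B ρ^ideal_{ABE|N}‖₁ ≤ ε_s both hold. Then (1/2) Σ_N Pr[N] ‖ρ^ideal_{ABE|N} − ρ^fin_{ABE|N}‖₁ ≤ ε_c + ε_s. -/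

import Mathlib

open scoped Kronecker ComplexOrder
open Matrix

/-- The trace norm `‖A‖₁ := tr √(Aᴴ A)` of a complex square matrix. -/
noncomputable def traceNorm {ι : Type*} [Fintype ι] [DecidableEq ι] (A : Matrix ι ι ℂ) : ℝ :=
  (((Matrix.posSemidef_conjTranspose_mul_self A).1.eigenvectorUnitary.1 *
      diagonal (((↑) : ℝ → ℂ) ∘ (√·) ∘ (Matrix.posSemidef_conjTranspose_mul_self A).1.eigenvalues) *
      (star (Matrix.posSemidef_conjTranspose_mul_self A).1.eigenvectorUnitary :
        Matrix ι ι ℂ)).trace).re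

/-- Keys of length `N`. -/
abbrev Key (N : ℕ) := Fin N → Bool

/-- `|k⟩⟨k'|` on the classical register with index type `κ`. -/
noncomputable def ketbra {κ : Type*} [Fintype κ] [DecidableEq κ] (k k' : κ) :
    Matrix κ κ ℂ :=
  Matrix.single k k' 1


namespace Matrix.PosSemidef
variable {ι : Type*} [Fintype ι] [DecidableEq ι]

/-- The square root of a positive semidefinite matrix, via the spectral theorem. -/
noncomputable def sqrt {A : Matrix ι ι ℂ} (hA : A.PosSemidef) : Matrix ι ι ℂ :=
  hA.1.eigenvectorUnitary.1 * diagonal (((↑) : ℝ → ℂ) ∘ (√·) ∘ hA.1.eigenvalues) *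
    (star hA.1.eigenvectorUnitary : Matrix ι ι ℂ)

open scoped MatrixOrder in
lemma sqrt_eq_cfc {A : Matrix ι ι ℂ} (hA : A.PosSemidef) : hA.sqrt = CFC.sqrt A := by
  rw [CFC.sqrt_eq_cfc, cfc_nnreal_eq_real _ A (Matrix.nonneg_iff_posSemidef.mpr hA), hA.1.cfc_eq]
  simp only [IsHermitian.cfc, sqrt, Unitary.conjStarAlgAut_apply]
  congr 3
  funext i
  simp [Real.coe_sqrt, Real.coe_toNNReal', hA.eigenvalues_nonneg i]

open scoped MatrixOrder in
lemma posSemidef_sqrt {A : Matrix ι ι ℂ} (hA : A.PosSemidef) : hA.sqrt.PosSemidef := by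
  rw [sqrt_eq_cfc]
  exact Matrix.nonneg_iff_posSemidef.mp (CFC.sqrt_nonneg A)

open scoped MatrixOrder in
lemma sqrt_mul_self {A : Matrix ι ι ℂ} (hA : A.PosSemidef) : hA.sqrt * hA.sqrt = A := by
  rw [sqrt_eq_cfc]
  exact CFC.sqrt_mul_sqrt_self A (Matrix.nonneg_iff_posSemidef.mpr hA)

lemma sq_sqrt {A : Matrix ι ι ℂ} (hA : A.PosSemidef) : hA.sqrt ^ 2 = A := by
  rw [pow_two, sqrt_mul_self]

open scoped MatrixOrder in
lemma eq_sqrt_of_sq_eq {B : Matrix ι ι ℂ} (hB : B.PosSemidef) {A : Matrix ι ι ℂ}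
    (hA : A.PosSemidef) (h : B ^ 2 = A) : B = hA.sqrt := by
  rw [sqrt_eq_cfc]
  exact (CFC.sqrt_unique (by rw [← pow_two]; exact h) (Matrix.nonneg_iff_posSemidef.mpr hB)).symm

end Matrix.PosSemidef

lemma traceNorm_def' {ι : Type*} [Fintype ι] [DecidableEq ι] (A : Matrix ι ι ℂ) :
    traceNorm A = ((Matrix.posSemidef_conjTranspose_mul_self A).sqrt.trace).re := rfl

section TraceNormLemmas
set_option linter.unusedSectionVars false
set_option linter.unusedVariables false
variable {ι : Type*} [Fintype ι] [DecidableEq ι]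

lemma re_trace_nonneg {M : Matrix ι ι ℂ} (hM : M.PosSemidef) : 0 ≤ M.trace.re := by
  have h : ∀ i, 0 ≤ M i i := fun i => by
    exact hM.diag_nonneg
  have : (0:ℂ) ≤ M.trace := Finset.sum_nonneg fun i _ => h i
  exact (Complex.le_def.mp this).1

lemma traceNorm_nonneg (A : Matrix ι ι ℂ) : 0 ≤ traceNorm A :=
  re_trace_nonneg (Matrix.posSemidef_conjTranspose_mul_self A).posSemidef_sqrt

lemma traceNorm_posSemidef {A : Matrix ι ι ℂ} (hA : A.PosSemidef) :
    traceNorm A = A.trace.re := by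
  have h : A = (Matrix.posSemidef_conjTranspose_mul_self A).sqrt :=
    hA.eq_sqrt_of_sq_eq _ (by rw [pow_two, hA.1])
  rw [traceNorm_def', ← h]

lemma traceNorm_eq_of {A B : Matrix ι ι ℂ} (h : Aᴴ * A = Bᴴ * B) :
    traceNorm A = traceNorm B := by
  have h2 : (Matrix.posSemidef_conjTranspose_mul_self A).sqrt
      = (Matrix.posSemidef_conjTranspose_mul_self B).sqrt :=
    (Matrix.posSemidef_conjTranspose_mul_self A).posSemidef_sqrt.eq_sqrt_of_sq_eq _
      (by rw [(Matrix.posSemidef_conjTranspose_mul_self A).sq_sqrt, h])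
  rw [traceNorm_def', traceNorm_def', h2]

lemma traceNorm_neg (A : Matrix ι ι ℂ) : traceNorm (-A) = traceNorm A :=
  traceNorm_eq_of (by simp)

lemma conj_mul_conj {U : Matrix ι ι ℂ} (h1 : Uᴴ * U = 1) (d e : ι → ℂ) :
    (U * diagonal d * Uᴴ) * (U * diagonal e * Uᴴ) = U * diagonal (fun i => d i * e i) * Uᴴ := by
  simp only [Matrix.mul_assoc]
  rw [← Matrix.mul_assoc Uᴴ U, h1, Matrix.one_mul,
    ← Matrix.mul_assoc (diagonal d) (diagonal e), diagonal_mul_diagonal]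

lemma traceNorm_isHermitian {A : Matrix ι ι ℂ} (hA : A.IsHermitian) :
    traceNorm A = ∑ i, |hA.eigenvalues i| := by
  have hcast : (RCLike.ofReal : ℝ → ℂ) = Complex.ofReal := rfl
  set U : Matrix ι ι ℂ := (hA.eigenvectorUnitary : Matrix ι ι ℂ) with hU
  have h1 : Uᴴ * U = 1 := Unitary.coe_star_mul_self _
  set C : Matrix ι ι ℂ := U * diagonal (fun i => ((|hA.eigenvalues i| : ℝ) : ℂ)) * Uᴴ with hC
  have hCpsd : C.PosSemidef := by
    refine Matrix.PosSemidef.mul_mul_conjTranspose_same (Matrix.PosSemidef.diagonal fun i => ?_) U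
    simpa using abs_nonneg (hA.eigenvalues i)
  have spec : A = U * diagonal (fun i => ((hA.eigenvalues i : ℝ) : ℂ)) * Uᴴ := by
    have := hA.spectral_theorem
    rw [hcast, Unitary.conjStarAlgAut_apply] at this
    exact this
  have hsq : C ^ 2 = Aᴴ * A := by
    rw [pow_two, hC, show Aᴴ = A from hA]
    conv_rhs => rw [spec]
    rw [conj_mul_conj h1, conj_mul_conj h1]
    have hfun : (fun i => ((|hA.eigenvalues i| : ℝ) : ℂ) * ((|hA.eigenvalues i| : ℝ) : ℂ))
        = fun i => ((hA.eigenvalues i : ℝ) : ℂ) * ((hA.eigenvalues i : ℝ) : ℂ) := by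
      funext i
      rw [← Complex.ofReal_mul, ← Complex.ofReal_mul, abs_mul_abs_self]
    rw [hfun]
  have hCs : C = (Matrix.posSemidef_conjTranspose_mul_self A).sqrt :=
    hCpsd.eq_sqrt_of_sq_eq _ hsq
  rw [traceNorm_def', ← hCs, hC, Matrix.trace_mul_cycle, h1, Matrix.one_mul, trace_diagonal]
  rw [Complex.re_sum]
  simp

lemma re_trace_sign_mul_le {A : Matrix ι ι ℂ} (hA : A.IsHermitian) {V : Matrix ι ι ℂ}
    (hV1 : Vᴴ * V = 1) (hV2 : V * Vᴴ = 1) (s : ι → ℝ) (hs : ∀ i, |s i| ≤ 1) :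
    ((V * diagonal (fun i => ((s i : ℝ) : ℂ)) * Vᴴ * A).trace).re ≤ ∑ j, |hA.eigenvalues j| := by
  have hcast : (RCLike.ofReal : ℝ → ℂ) = Complex.ofReal := rfl
  set U : Matrix ι ι ℂ := (hA.eigenvectorUnitary : Matrix ι ι ℂ) with hU
  have h1 : Uᴴ * U = 1 := Unitary.coe_star_mul_self _
  have h2 : U * Uᴴ = 1 := Unitary.coe_mul_star_self _
  set μ : ι → ℝ := hA.eigenvalues with hμ
  have spec : A = U * diagonal (fun i => ((μ i : ℝ) : ℂ)) * Uᴴ := by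
    have := hA.spectral_theorem
    rw [hcast, Unitary.conjStarAlgAut_apply] at this
    exact this
  set W : Matrix ι ι ℂ := Vᴴ * U with hW
  have hWu : Wᴴ * W = 1 := by
    rw [hW, conjTranspose_mul, conjTranspose_conjTranspose, Matrix.mul_assoc,
      ← Matrix.mul_assoc V, hV2, Matrix.one_mul, h1]
  have hcol : ∀ j, ∑ i, Complex.normSq (W i j) = 1 := by
    intro j
    have h := congrArg (fun M : Matrix ι ι ℂ => (M j j).re) hWu
    simpa [Matrix.mul_apply, Matrix.conjTranspose_apply, Complex.normSq_eq_conj_mul_self,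
      Complex.re_sum, Complex.normSq_apply] using h
  have htr : (V * diagonal (fun i => ((s i : ℝ) : ℂ)) * Vᴴ * A).trace
      = ((diagonal (fun i => ((s i : ℝ) : ℂ))) * (W * diagonal (fun i => ((μ i : ℝ) : ℂ)) * Wᴴ)).trace := by
    conv_lhs => rw [spec]
    have e1 : V * diagonal (fun i => ((s i : ℝ) : ℂ)) * Vᴴ * (U * diagonal (fun i => ((μ i : ℝ) : ℂ)) * Uᴴ)
        = V * (diagonal (fun i => ((s i : ℝ) : ℂ)) * Vᴴ * (U * diagonal (fun i => ((μ i : ℝ) : ℂ)) * Uᴴ)) := by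
      simp only [Matrix.mul_assoc]
    rw [e1, Matrix.trace_mul_comm]
    congr 1
    rw [hW, conjTranspose_mul, conjTranspose_conjTranspose]
    simp only [Matrix.mul_assoc]
  rw [htr]
  have hdiag : ∀ i, (W * diagonal (fun i => ((μ i : ℝ) : ℂ)) * Wᴴ) i i
      = ∑ j, ((μ j : ℂ) * ((Complex.normSq (W i j) : ℝ) : ℂ)) := by
    intro i
    simp only [Matrix.mul_apply, Matrix.conjTranspose_apply, Matrix.diagonal_apply,
      mul_ite, mul_zero, ite_mul, zero_mul, Finset.sum_ite_eq', Finset.mem_univ, if_true]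
    refine Finset.sum_congr rfl fun j _ => ?_
    rw [show (star (W i j)) = (starRingEnd ℂ) (W i j) from rfl,
      mul_comm (W i j) ((μ j : ℝ) : ℂ), mul_assoc, Complex.mul_conj]
  have htr2 : ((diagonal (fun i => ((s i : ℝ) : ℂ))) * (W * diagonal (fun i => ((μ i : ℝ) : ℂ)) * Wᴴ)).trace
      = ∑ i, ∑ j, ((s i * μ j * Complex.normSq (W i j) : ℝ) : ℂ) := by
    simp only [Matrix.trace, Matrix.diag_apply, Matrix.diagonal_mul]
    refine Finset.sum_congr rfl fun i _ => ?_
    rw [hdiag i, Finset.mul_sum]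
    refine Finset.sum_congr rfl fun j _ => ?_
    push_cast
    ring
  rw [htr2, Complex.re_sum]
  simp only [Complex.re_sum, Complex.ofReal_re]
  calc ∑ i, ∑ j, s i * μ j * Complex.normSq (W i j)
      ≤ ∑ i, ∑ j, |μ j| * Complex.normSq (W i j) := by
        refine Finset.sum_le_sum fun i _ => Finset.sum_le_sum fun j _ => ?_
        refine mul_le_mul_of_nonneg_right ?_ (Complex.normSq_nonneg _)
        calc s i * μ j ≤ |s i * μ j| := le_abs_self _
          _ = |s i| * |μ j| := abs_mul _ _
          _ ≤ 1 * |μ j| := mul_le_mul_of_nonneg_right (hs i) (abs_nonneg _)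
          _ = |μ j| := one_mul _
    _ = ∑ j, |μ j| := by
        rw [Finset.sum_comm]
        refine Finset.sum_congr rfl fun j _ => ?_
        rw [← Finset.mul_sum, hcol j, mul_one]

lemma traceNorm_add_le_of_isHermitian {A B : Matrix ι ι ℂ}
    (hA : A.IsHermitian) (hB : B.IsHermitian) :
    traceNorm (A + B) ≤ traceNorm A + traceNorm B := by
  have hcast : (RCLike.ofReal : ℝ → ℂ) = Complex.ofReal := rfl
  have hH : (A + B).IsHermitian := hA.add hB
  set U : Matrix ι ι ℂ := (hH.eigenvectorUnitary : Matrix ι ι ℂ) with hU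
  have h1 : Uᴴ * U = 1 := Unitary.coe_star_mul_self _
  have h2 : U * Uᴴ = 1 := Unitary.coe_mul_star_self _
  set μ : ι → ℝ := hH.eigenvalues with hμ
  have spec : A + B = U * diagonal (fun i => ((μ i : ℝ) : ℂ)) * Uᴴ := by
    have := hH.spectral_theorem
    rw [hcast, Unitary.conjStarAlgAut_apply] at this
    exact this
  set s : ι → ℝ := fun i => if μ i < 0 then -1 else 1 with hsdef
  have hs : ∀ i, |s i| ≤ 1 := by
    intro i
    rw [hsdef]
    dsimp only
    split <;> simp
  set S : Matrix ι ι ℂ := U * diagonal (fun i => ((s i : ℝ) : ℂ)) * Uᴴ with hS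
  have key : ((S * (A + B)).trace).re = ∑ i, |μ i| := by
    rw [hS]
    conv_lhs => rw [spec]
    rw [conj_mul_conj h1, Matrix.trace_mul_cycle, h1, Matrix.one_mul, trace_diagonal]
    rw [Complex.re_sum]
    refine Finset.sum_congr rfl fun i _ => ?_
    rw [← Complex.ofReal_mul, Complex.ofReal_re, hsdef]
    dsimp only
    by_cases h : μ i < 0
    · rw [if_pos h, abs_of_neg h]; ring
    · rw [if_neg h, abs_of_nonneg (not_lt.mp h)]; ring
  have hAB : traceNorm (A + B) = ∑ i, |μ i| := traceNorm_isHermitian hH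
  have expand : ((S * (A + B)).trace).re = ((S * A).trace).re + ((S * B).trace).re := by
    rw [Matrix.mul_add, Matrix.trace_add, Complex.add_re]
  have bA : ((S * A).trace).re ≤ traceNorm A := by
    rw [traceNorm_isHermitian hA]
    exact re_trace_sign_mul_le hA h1 h2 s hs
  have bB : ((S * B).trace).re ≤ traceNorm B := by
    rw [traceNorm_isHermitian hB]
    exact re_trace_sign_mul_le hB h1 h2 s hs
  rw [hAB, ← key, expand]
  exact add_le_add bA bB

end TraceNormLemmas

section Aux
set_option linter.unusedSectionVars false
variable {P E : Type*} [Fintype P] [DecidableEq P] [Fintype E] [DecidableEq E]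

lemma kron_conjTranspose (A : Matrix P P ℂ) (B : Matrix E E ℂ) :
    (A ⊗ₖ B)ᴴ = Aᴴ ⊗ₖ Bᴴ := by
  ext ⟨i, j⟩ ⟨k, l⟩
  simp [Matrix.conjTranspose_apply, Matrix.kroneckerMap_apply, star_mul']

lemma stdBasis_herm (p : P) : (single p p (1 : ℂ))ᴴ = single p p 1 := by
  ext i j
  simp [Matrix.conjTranspose_apply, Matrix.single, apply_ite star, and_comm]

lemma trace_stdBasis (p : P) : (single p p (1 : ℂ)).trace = 1 := by
  simp [Matrix.trace, Matrix.diag, Matrix.single, Finset.sum_ite_eq]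

lemma kron_sum_right {γ : Type*} (s : Finset γ) (A : Matrix P P ℂ) (B : γ → Matrix E E ℂ) :
    A ⊗ₖ (∑ b ∈ s, B b) = ∑ b ∈ s, A ⊗ₖ B b := by
  ext ⟨i, j⟩ ⟨k, l⟩
  simp [Matrix.kroneckerMap_apply, Matrix.sum_apply, Finset.mul_sum]

lemma kron_sub_right (A : Matrix P P ℂ) (B C : Matrix E E ℂ) :
    A ⊗ₖ (B - C) = A ⊗ₖ B - A ⊗ₖ C := by
  ext ⟨i, j⟩ ⟨k, l⟩
  simp [Matrix.kroneckerMap_apply, Matrix.sub_apply, mul_sub]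

lemma psd_smul {c : ℝ} (hc : 0 ≤ c) {A : Matrix E E ℂ} (hA : A.PosSemidef) :
    ((c : ℂ) • A).PosSemidef := by
  constructor
  · rw [IsHermitian, conjTranspose_smul, hA.1]
    congr 1
    simp
  · exact (hA.smul (a := (c:ℂ)) (by rw [← Complex.ofReal_zero, Complex.real_le_real]; exact hc)).2

lemma psd_sum {γ : Type*} (s : Finset γ) (B : γ → Matrix E E ℂ)
    (h : ∀ b ∈ s, (B b).PosSemidef) : (∑ b ∈ s, B b).PosSemidef := by
  classical
  induction s using Finset.induction_on with
  | empty => simpa using Matrix.PosSemidef.zero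
  | insert _ _ hni ih =>
    rw [Finset.sum_insert hni]
    exact ((h _ (Finset.mem_insert_self _ _)).add
      (ih fun b hb => h b (Finset.mem_insert_of_mem hb)))

lemma block_mul_block (C D : P → Matrix E E ℂ) :
    (∑ p, (single p p (1:ℂ) : Matrix P P ℂ) ⊗ₖ C p) *
      (∑ q, (single q q (1:ℂ) : Matrix P P ℂ) ⊗ₖ D q)
    = ∑ p, (single p p (1:ℂ) : Matrix P P ℂ) ⊗ₖ (C p * D p) := by
  rw [Finset.sum_mul_sum]
  refine Finset.sum_congr rfl fun p _ => ?_
  have hterm : ∀ q, ((single p p (1:ℂ) : Matrix P P ℂ) ⊗ₖ C p) *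
      ((single q q (1:ℂ) : Matrix P P ℂ) ⊗ₖ D q)
      = if p = q then (single p p (1:ℂ) : Matrix P P ℂ) ⊗ₖ (C p * D q) else 0 := by
    intro q
    by_cases h : p = q
    · subst h
      rw [if_pos rfl, ← Matrix.mul_kronecker_mul, Matrix.single_mul_single_same, one_mul]
    · have h0 : Matrix.single p p (1:ℂ) * Matrix.single q q (1:ℂ) = 0 :=
        Matrix.single_mul_single_of_ne (c := (1:ℂ)) (i := p) (j := p) (k := q) (h := h) (d := (1:ℂ))
      rw [if_neg h, ← Matrix.mul_kronecker_mul, h0, Matrix.zero_kronecker]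
  simp only [hterm]
  rw [Finset.sum_ite_eq, if_pos (Finset.mem_univ p)]

lemma block_conjTranspose (C : P → Matrix E E ℂ) :
    (∑ p, (single p p (1:ℂ) : Matrix P P ℂ) ⊗ₖ C p)ᴴ
      = ∑ p, (single p p (1:ℂ) : Matrix P P ℂ) ⊗ₖ (C p)ᴴ := by
  rw [Matrix.conjTranspose_sum]
  exact Finset.sum_congr rfl fun p _ => by rw [kron_conjTranspose, stdBasis_herm]

lemma traceNorm_block (B : P → Matrix E E ℂ) :
    traceNorm (∑ p, (single p p (1:ℂ) : Matrix P P ℂ) ⊗ₖ B p)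
      = ∑ p, traceNorm (B p) := by
  set M : Matrix (P × E) (P × E) ℂ := ∑ p, (single p p (1:ℂ) : Matrix P P ℂ) ⊗ₖ B p
    with hM
  have hMM : Mᴴ * M = ∑ p, (single p p (1:ℂ) : Matrix P P ℂ) ⊗ₖ ((B p)ᴴ * B p) := by
    rw [hM, block_conjTranspose, block_mul_block]
  set C : Matrix (P × E) (P × E) ℂ :=
    ∑ p, (single p p (1:ℂ) : Matrix P P ℂ) ⊗ₖ
      (Matrix.posSemidef_conjTranspose_mul_self (B p)).sqrt with hC
  have hterm : ∀ p : P, ((single p p (1:ℂ) : Matrix P P ℂ) ⊗ₖ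
      (Matrix.posSemidef_conjTranspose_mul_self (B p)).sqrt).PosSemidef := by
    intro p
    set S := (Matrix.posSemidef_conjTranspose_mul_self (B p)).sqrt with hS
    have hSpsd : S.PosSemidef := (Matrix.posSemidef_conjTranspose_mul_self (B p)).posSemidef_sqrt
    set Q := hSpsd.sqrt with hQ
    have : (single p p (1:ℂ) : Matrix P P ℂ) ⊗ₖ S
        = ((single p p (1:ℂ) : Matrix P P ℂ) ⊗ₖ Q)ᴴ *
          ((single p p (1:ℂ) : Matrix P P ℂ) ⊗ₖ Q) := by
      rw [kron_conjTranspose, stdBasis_herm, hSpsd.posSemidef_sqrt.1,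
        ← Matrix.mul_kronecker_mul, Matrix.single_mul_single_same, one_mul,
        hSpsd.sqrt_mul_self]
    rw [this]
    exact Matrix.posSemidef_conjTranspose_mul_self _
  have hCpsd : C.PosSemidef := psd_sum _ _ fun p _ => hterm p
  have hCsq : C ^ 2 = Mᴴ * M := by
    rw [pow_two, hC, block_mul_block, hMM]
    exact Finset.sum_congr rfl fun p _ => by
      rw [(Matrix.posSemidef_conjTranspose_mul_self (B p)).sqrt_mul_self]
  have hCs : C = (Matrix.posSemidef_conjTranspose_mul_self M).sqrt :=
    hCpsd.eq_sqrt_of_sq_eq _ hCsq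
  rw [traceNorm_def', ← hCs, hC, Matrix.trace_sum, Complex.re_sum]
  refine Finset.sum_congr rfl fun p _ => ?_
  rw [Matrix.trace_kronecker, trace_stdBasis, one_mul, traceNorm_def']

end Aux

section PerN
set_option linter.unusedSectionVars false
variable {K E' : Type*} [Fintype K] [DecidableEq K] [Fintype E'] [DecidableEq E']

lemma blockX (P : K → K → ℝ) (ρ : K → K → Matrix E' E' ℂ) (c : ℂ) :
    (∑ a, ∑ b, (P a b : ℂ) • ((single a a (1:ℂ) : Matrix K K ℂ) ⊗ₖ ρ a b))
      - c • ∑ k : K, (single k k (1:ℂ) : Matrix K K ℂ) ⊗ₖ (∑ a, ∑ b, (P a b : ℂ) • ρ a b)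
    = ∑ k : K, (single k k (1:ℂ) : Matrix K K ℂ) ⊗ₖ
        ((∑ b, (P k b : ℂ) • ρ k b) - c • (∑ a, ∑ b, (P a b : ℂ) • ρ a b)) := by
  have h1 : ∀ k : K, (single k k (1:ℂ) : Matrix K K ℂ) ⊗ₖ
      ((∑ b, (P k b : ℂ) • ρ k b) - c • (∑ a, ∑ b, (P a b : ℂ) • ρ a b))
      = (∑ b, (P k b : ℂ) • ((single k k (1:ℂ) : Matrix K K ℂ) ⊗ₖ ρ k b))
        - c • ((single k k (1:ℂ) : Matrix K K ℂ) ⊗ₖ (∑ a, ∑ b, (P a b : ℂ) • ρ a b)) := by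
    intro k
    rw [kron_sub_right, kron_sum_right]
    congr 1
    · exact Finset.sum_congr rfl fun b _ => by rw [Matrix.kronecker_smul]
    · rw [Matrix.kronecker_smul]
  simp only [h1]
  rw [Finset.sum_sub_distrib, ← Finset.smul_sum]

lemma blockDelta (P : K → K → ℝ) (ρ : K → K → Matrix E' E' ℂ) (c : ℂ) :
    c • (∑ k : K, (single (k,k) (k,k) (1:ℂ) : Matrix (K×K) (K×K) ℂ)
          ⊗ₖ (∑ a, ∑ b, (P a b : ℂ) • ρ a b))
      - ∑ a, ∑ b, (P a b : ℂ) • ((single (a,b) (a,b) (1:ℂ) : Matrix (K×K) (K×K) ℂ) ⊗ₖ ρ a b)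
    = ∑ p : K × K, (single p p (1:ℂ) : Matrix (K×K) (K×K) ℂ) ⊗ₖ
        ((if p.1 = p.2 then c • (∑ a, ∑ b, (P a b : ℂ) • ρ a b) else 0)
          - (P p.1 p.2 : ℂ) • ρ p.1 p.2) := by
  have h1 : ∀ p : K × K, (single p p (1:ℂ) : Matrix (K×K) (K×K) ℂ) ⊗ₖ
      ((if p.1 = p.2 then c • (∑ a, ∑ b, (P a b : ℂ) • ρ a b) else 0)
        - (P p.1 p.2 : ℂ) • ρ p.1 p.2)
      = (if p.1 = p.2 then c • ((single p p (1:ℂ) : Matrix (K×K) (K×K) ℂ)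
            ⊗ₖ (∑ a, ∑ b, (P a b : ℂ) • ρ a b)) else 0)
        - (P p.1 p.2 : ℂ) • ((single p p (1:ℂ) : Matrix (K×K) (K×K) ℂ) ⊗ₖ ρ p.1 p.2) := by
    intro p
    rw [kron_sub_right, Matrix.kronecker_smul]
    congr 1
    by_cases h : p.1 = p.2
    · rw [if_pos h, if_pos h, Matrix.kronecker_smul]
    · rw [if_neg h, if_neg h, Matrix.kronecker_zero]
  simp only [h1]
  rw [Finset.sum_sub_distrib]
  congr 1
  · rw [Fintype.sum_prod_type]
    dsimp only
    have h2 : ∀ a : K, (∑ b, if a = b then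
        c • ((single (a,b) (a,b) (1:ℂ) : Matrix (K×K) (K×K) ℂ)
          ⊗ₖ (∑ a, ∑ b, (P a b : ℂ) • ρ a b)) else 0)
        = c • ((single (a,a) (a,a) (1:ℂ) : Matrix (K×K) (K×K) ℂ)
          ⊗ₖ (∑ a, ∑ b, (P a b : ℂ) • ρ a b)) := by
      intro a
      rw [Finset.sum_ite_eq, if_pos (Finset.mem_univ a)]
    simp only [h2]
    rw [← Finset.smul_sum]
  · rw [Fintype.sum_prod_type]


lemma perN_main (P : K → K → ℝ) (hP : ∀ a b, 0 ≤ P a b)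
    (ρ : K → K → Matrix E' E' ℂ) (hpos : ∀ a b, (ρ a b).PosSemidef)
    (htr : ∀ a b, (ρ a b).trace = 1) (c : ℝ) (hc : 0 ≤ c) :
    traceNorm ((c : ℂ) • (∑ k : K, (single (k,k) (k,k) (1:ℂ) : Matrix (K×K) (K×K) ℂ)
          ⊗ₖ (∑ a, ∑ b, (P a b : ℂ) • ρ a b))
        - ∑ a, ∑ b, (P a b : ℂ) • ((single (a,b) (a,b) (1:ℂ) : Matrix (K×K) (K×K) ℂ) ⊗ₖ ρ a b))
      ≤ traceNorm ((∑ a, ∑ b, (P a b : ℂ) • ((single a a (1:ℂ) : Matrix K K ℂ) ⊗ₖ ρ a b))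
          - (c : ℂ) • ∑ k : K, (single k k (1:ℂ) : Matrix K K ℂ) ⊗ₖ (∑ a, ∑ b, (P a b : ℂ) • ρ a b))
        + 2 * (∑ a, ∑ b, if a ≠ b then P a b else 0) := by
  rw [blockDelta P ρ (c:ℂ), blockX P ρ (c:ℂ), traceNorm_block, traceNorm_block]
  set σ : Matrix E' E' ℂ := ∑ a, ∑ b, (P a b : ℂ) • ρ a b with hσ
  have hσpsd : σ.PosSemidef :=
    psd_sum _ _ fun a _ => psd_sum _ _ fun b _ => psd_smul (hP a b) (hpos a b)
  have hcσpsd : ((c:ℂ) • σ).PosSemidef := psd_smul hc hσpsd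
  have hrowpsd : ∀ k, (∑ b, (P k b : ℂ) • ρ k b).PosSemidef := fun k =>
    psd_sum _ _ fun b _ => psd_smul (hP k b) (hpos k b)
  have hRpsd : ∀ k, (∑ b, if k = b then 0 else (P k b : ℂ) • ρ k b).PosSemidef := fun k =>
    psd_sum _ _ fun b _ => by
      by_cases h : k = b
      · rw [if_pos h]; exact Matrix.PosSemidef.zero
      · rw [if_neg h]; exact psd_smul (hP k b) (hpos k b)
  have hBherm : ∀ k, ((∑ b, (P k b : ℂ) • ρ k b) - (c:ℂ) • σ).IsHermitian := fun k =>
    ((hrowpsd k).1).sub hcσpsd.1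
  have hRtr : ∀ k, traceNorm (∑ b, if k = b then 0 else (P k b : ℂ) • ρ k b)
      = ∑ b, if k = b then 0 else P k b := by
    intro k
    rw [traceNorm_posSemidef (hRpsd k), Matrix.trace_sum, Complex.re_sum]
    refine Finset.sum_congr rfl fun b _ => ?_
    by_cases h : k = b
    · rw [if_pos h, if_pos h]; simp
    · rw [if_neg h, if_neg h, Matrix.trace_smul, htr, smul_eq_mul, mul_one, Complex.ofReal_re]
  have hPtr : ∀ a b, traceNorm ((P a b : ℂ) • ρ a b) = P a b := by
    intro a b
    rw [traceNorm_posSemidef (psd_smul (hP a b) (hpos a b)), Matrix.trace_smul, htr,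
      smul_eq_mul, mul_one, Complex.ofReal_re]
  have key : ∀ p : K × K,
      traceNorm ((if p.1 = p.2 then (c:ℂ) • σ else 0) - (P p.1 p.2 : ℂ) • ρ p.1 p.2)
      ≤ (if p.1 = p.2 then
          traceNorm ((∑ b, (P p.1 b : ℂ) • ρ p.1 b) - (c:ℂ) • σ)
            + (∑ b, if p.1 = b then 0 else P p.1 b)
        else P p.1 p.2) := by
    rintro ⟨a, b⟩
    dsimp only
    by_cases h : a = b
    · subst h
      rw [if_pos rfl, if_pos rfl]
      have hsplit : (∑ b, (P a b : ℂ) • ρ a b)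
          - (∑ b, if a = b then 0 else (P a b : ℂ) • ρ a b) = (P a a : ℂ) • ρ a a := by
        rw [← Finset.sum_sub_distrib]
        have hterm : ∀ b, ((P a b : ℂ) • ρ a b - if a = b then 0 else (P a b : ℂ) • ρ a b)
            = if a = b then (P a b : ℂ) • ρ a b else 0 := by
          intro b
          by_cases hb : a = b
          · rw [if_pos hb, if_pos hb, sub_zero]
          · rw [if_neg hb, if_neg hb, sub_self]
        simp only [hterm]
        rw [Finset.sum_ite_eq, if_pos (Finset.mem_univ a)]
      have hid : (c:ℂ) • σ - (P a a : ℂ) • ρ a a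
          = (-((∑ b, (P a b : ℂ) • ρ a b) - (c:ℂ) • σ))
            + (∑ b, if a = b then 0 else (P a b : ℂ) • ρ a b) := by
        rw [neg_sub, ← hsplit]
        abel
      rw [hid]
      calc traceNorm ((-((∑ b, (P a b : ℂ) • ρ a b) - (c:ℂ) • σ))
            + (∑ b, if a = b then 0 else (P a b : ℂ) • ρ a b))
          ≤ traceNorm (-((∑ b, (P a b : ℂ) • ρ a b) - (c:ℂ) • σ))
            + traceNorm (∑ b, if a = b then 0 else (P a b : ℂ) • ρ a b) :=
            traceNorm_add_le_of_isHermitian ((hBherm a).neg) (hRpsd a).1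
        _ = traceNorm ((∑ b, (P a b : ℂ) • ρ a b) - (c:ℂ) • σ)
            + (∑ b, if a = b then 0 else P a b) := by
            rw [traceNorm_neg, hRtr a]
    · rw [if_neg h, if_neg h, zero_sub, traceNorm_neg, hPtr]
  calc (∑ p : K × K,
        traceNorm ((if p.1 = p.2 then (c:ℂ) • σ else 0) - (P p.1 p.2 : ℂ) • ρ p.1 p.2))
      ≤ ∑ p : K × K, (if p.1 = p.2 then
          traceNorm ((∑ b, (P p.1 b : ℂ) • ρ p.1 b) - (c:ℂ) • σ)
            + (∑ b, if p.1 = b then 0 else P p.1 b)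
        else P p.1 p.2) := Finset.sum_le_sum fun p _ => key p
    _ = (∑ k : K, traceNorm ((∑ b, (P k b : ℂ) • ρ k b) - (c:ℂ) • σ))
        + 2 * (∑ a, ∑ b, if a ≠ b then P a b else 0) := by
        rw [Fintype.sum_prod_type]
        dsimp only
        have hsplit2 : ∀ a : K, (∑ b, if a = b then
            traceNorm ((∑ b, (P a b : ℂ) • ρ a b) - (c:ℂ) • σ)
              + (∑ b, if a = b then 0 else P a b)
          else P a b)
            = (traceNorm ((∑ b, (P a b : ℂ) • ρ a b) - (c:ℂ) • σ)
              + (∑ b, if a = b then 0 else P a b))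
              + (∑ b, if a = b then 0 else P a b) := by
          intro a
          have : ∀ b : K, (if a = b then
              traceNorm ((∑ b, (P a b : ℂ) • ρ a b) - (c:ℂ) • σ)
                + (∑ b, if a = b then 0 else P a b)
            else P a b)
              = (if a = b then
                  traceNorm ((∑ b, (P a b : ℂ) • ρ a b) - (c:ℂ) • σ)
                    + (∑ b, if a = b then 0 else P a b) else 0)
                + (if a = b then 0 else P a b) := by
            intro b
            by_cases hb : a = b
            · rw [if_pos hb, if_pos hb, if_pos hb, add_zero]
            · rw [if_neg hb, if_neg hb, if_neg hb, zero_add]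
          simp only [this]
          rw [Finset.sum_add_distrib, Finset.sum_ite_eq, if_pos (Finset.mem_univ a)]
        simp only [hsplit2]
        simp only [ne_eq, ite_not]
        rw [Finset.sum_add_distrib, Finset.sum_add_distrib]
        ring


lemma perN_bound (P : K → K → ℝ) (hP : ∀ a b, 0 ≤ P a b) (hP1 : ∑ a, ∑ b, P a b = 1)
    (ρ : K → K → Matrix E' E' ℂ) (hpos : ∀ a b, (ρ a b).PosSemidef)
    (htr : ∀ a b, (ρ a b).trace = 1) (c : ℝ) (hc : 0 ≤ c)
    (hcard : c * (Fintype.card K : ℝ) ≤ 1) :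
    traceNorm ((∑ a, ∑ b, (P a b : ℂ) • ((single a a (1:ℂ) : Matrix K K ℂ) ⊗ₖ ρ a b))
        - (c : ℂ) • ∑ k : K, (single k k (1:ℂ) : Matrix K K ℂ)
            ⊗ₖ (∑ a, ∑ b, (P a b : ℂ) • ρ a b)) ≤ 2 := by
  rw [blockX P ρ (c:ℂ), traceNorm_block]
  set σ : Matrix E' E' ℂ := ∑ a, ∑ b, (P a b : ℂ) • ρ a b with hσ
  have hσpsd : σ.PosSemidef :=
    psd_sum _ _ fun a _ => psd_sum _ _ fun b _ => psd_smul (hP a b) (hpos a b)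
  have hcσpsd : ((c:ℂ) • σ).PosSemidef := psd_smul hc hσpsd
  have hrowpsd : ∀ k, (∑ b, (P k b : ℂ) • ρ k b).PosSemidef := fun k =>
    psd_sum _ _ fun b _ => psd_smul (hP k b) (hpos k b)
  have hσtr : σ.trace = 1 := by
    have h1 : σ.trace = ∑ a, ∑ b, ((P a b : ℝ) : ℂ) := by
      rw [hσ, Matrix.trace_sum]
      refine Finset.sum_congr rfl fun a _ => ?_
      rw [Matrix.trace_sum]
      refine Finset.sum_congr rfl fun b _ => ?_
      rw [Matrix.trace_smul, htr, smul_eq_mul, mul_one]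
    rw [h1]
    exact_mod_cast hP1
  have hrowtr : ∀ k, traceNorm (∑ b, (P k b : ℂ) • ρ k b) = ∑ b, P k b := by
    intro k
    rw [traceNorm_posSemidef (hrowpsd k), Matrix.trace_sum, Complex.re_sum]
    refine Finset.sum_congr rfl fun b _ => ?_
    rw [Matrix.trace_smul, htr, smul_eq_mul, mul_one, Complex.ofReal_re]
  have hcσtr : traceNorm ((c:ℂ) • σ) = c := by
    rw [traceNorm_posSemidef hcσpsd, Matrix.trace_smul, hσtr, smul_eq_mul, mul_one,
      Complex.ofReal_re]
  have hk : ∀ k : K, traceNorm ((∑ b, (P k b : ℂ) • ρ k b) - (c:ℂ) • σ)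
      ≤ (∑ b, P k b) + c := by
    intro k
    rw [sub_eq_add_neg]
    calc traceNorm ((∑ b, (P k b : ℂ) • ρ k b) + -((c:ℂ) • σ))
        ≤ traceNorm (∑ b, (P k b : ℂ) • ρ k b) + traceNorm (-((c:ℂ) • σ)) :=
          traceNorm_add_le_of_isHermitian (hrowpsd k).1 hcσpsd.1.neg
      _ = (∑ b, P k b) + c := by rw [traceNorm_neg, hrowtr, hcσtr]
  calc (∑ k : K, traceNorm ((∑ b, (P k b : ℂ) • ρ k b) - (c:ℂ) • σ))
      ≤ ∑ k : K, ((∑ b, P k b) + c) := Finset.sum_le_sum fun k _ => hk k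
    _ = 1 + c * (Fintype.card K : ℝ) := by
        rw [Finset.sum_add_distrib, hP1, Finset.sum_const, nsmul_eq_mul, mul_comm]
        rw [Finset.card_univ]
    _ ≤ 2 := by linarith

end PerN

/-- If the protocol is `ε_c`-correct and `ε_s`-secret, it is `(ε_c + ε_s)`-secure. -/
theorem secure_of_correct_and_secret
    {E : ℕ → Type*} [∀ N, Fintype (E N)] [∀ N, DecidableEq (E N)]
    (εc εs : ℝ) (hεc : 0 ≤ εc) (hεs : 0 ≤ εs)
    -- probability distribution over final key lengths
    (PrN : ℕ → ℝ) (hPrN : ∀ N, 0 ≤ PrN N) (hPrN1 : ∑' N, PrN N = 1)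
    -- joint distribution of Alice's and Bob's final keys given length N
    (PrK : ∀ N, Key N → Key N → ℝ) (hPrK : ∀ N kA kB, 0 ≤ PrK N kA kB)
    (hPrK1 : ∀ N, ∑ kA, ∑ kB, PrK N kA kB = 1)
    -- Eve's conditional states: density operators
    (ρE : ∀ N, Key N → Key N → Matrix (E N) (E N) ℂ)
    (hρEpos : ∀ N kA kB, (ρE N kA kB).PosSemidef)
    (hρEtr : ∀ N kA kB, (ρE N kA kB).trace = 1)
    -- the actual ccq state ρ^fin_{ABE|N}
    (ρfin : ∀ N, Matrix ((Key N × Key N) × E N) ((Key N × Key N) × E N) ℂ)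
    (hρfin : ∀ N, ρfin N =
      ∑ kA, ∑ kB, (PrK N kA kB : ℂ) • (ketbra (kA, kB) (kA, kB) ⊗ₖ ρE N kA kB))
    -- the ideal state ρ^ideal_{ABE|N} = 2^{-N} Σ_k |k,k⟩⟨k,k| ⊗ tr_AB ρ^fin
    (ρideal : ∀ N, Matrix ((Key N × Key N) × E N) ((Key N × Key N) × E N) ℂ)
    (hρideal : ∀ N, ρideal N = ((2 : ℂ) ^ N)⁻¹ •
      ∑ k : Key N, ketbra (k, k) (k, k) ⊗ₖ (∑ kA, ∑ kB, (PrK N kA kB : ℂ) • ρE N kA kB))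
    -- correctness: Σ_N Pr[N]·Pr[k_A ≠ k_B | N] ≤ ε_c
    (hcorrect : ∑' N, PrN N *
      (∑ kA, ∑ kB, if kA ≠ kB then PrK N kA kB else 0) ≤ εc)
    -- secrecy: (1/2) Σ_N Pr[N] ‖tr_B ρ^fin_{ABE|N} − tr_B ρ^ideal_{ABE|N}‖₁ ≤ ε_s,
    -- with the partial traces over B written out explicitly
    (hsecret : (1 / 2) * ∑' N, PrN N *
      traceNorm ((∑ kA, ∑ kB, (PrK N kA kB : ℂ) • ((ketbra kA kA : Matrix (Key N) (Key N) ℂ) ⊗ₖ ρE N kA kB)) -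
        ((2 : ℂ) ^ N)⁻¹ • ∑ k : Key N,
          (ketbra k k : Matrix (Key N) (Key N) ℂ) ⊗ₖ (∑ kA, ∑ kB, (PrK N kA kB : ℂ) • ρE N kA kB)) ≤ εs) :
    (1 / 2) * ∑' N, PrN N * traceNorm (ρideal N - ρfin N) ≤ εc + εs := by
  classical
  have hcast2 : ∀ N : ℕ, ((2 : ℂ) ^ N)⁻¹ = ((((2:ℝ) ^ N)⁻¹ : ℝ) : ℂ) := by
    intro N; push_cast; ring
  have hPsum : Summable PrN := by
    by_contra h
    rw [tsum_eq_zero_of_not_summable h] at hPrN1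
    norm_num at hPrN1
  have hcard : ∀ N : ℕ, ((2:ℝ) ^ N)⁻¹ * (Fintype.card (Key N) : ℝ) ≤ 1 := by
    intro N
    have hcK : Fintype.card (Key N) = 2 ^ N := by
      rw [Fintype.card_fun, Fintype.card_bool, Fintype.card_fin]
    rw [hcK]
    push_cast
    rw [inv_mul_cancel₀ (by positivity : ((2:ℝ) ^ N) ≠ 0)]
  have hargD : ∀ N : ℕ, ((∑ kA, ∑ kB, (PrK N kA kB : ℂ) • ((ketbra kA kA : Matrix (Key N) (Key N) ℂ) ⊗ₖ ρE N kA kB)) -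
        ((2 : ℂ) ^ N)⁻¹ • ∑ k : Key N,
          (ketbra k k : Matrix (Key N) (Key N) ℂ) ⊗ₖ (∑ kA, ∑ kB, (PrK N kA kB : ℂ) • ρE N kA kB))
      = ((∑ a, ∑ b, (PrK N a b : ℂ) • ((single a a (1:ℂ) : Matrix (Key N) (Key N) ℂ) ⊗ₖ ρE N a b))
          - ((((2:ℝ) ^ N)⁻¹ : ℝ) : ℂ) • ∑ k : Key N, (single k k (1:ℂ) : Matrix (Key N) (Key N) ℂ) ⊗ₖ (∑ a, ∑ b, (PrK N a b : ℂ) • ρE N a b)) := by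
    intro N
    rw [hcast2 N]
    rfl
  have hkey : ∀ N, PrN N * traceNorm (ρideal N - ρfin N)
      ≤ 2 * (PrN N * (∑ kA, ∑ kB, if kA ≠ kB then PrK N kA kB else 0))
        + PrN N * traceNorm ((∑ kA, ∑ kB, (PrK N kA kB : ℂ) • ((ketbra kA kA : Matrix (Key N) (Key N) ℂ) ⊗ₖ ρE N kA kB)) -
        ((2 : ℂ) ^ N)⁻¹ • ∑ k : Key N,
          (ketbra k k : Matrix (Key N) (Key N) ℂ) ⊗ₖ (∑ kA, ∑ kB, (PrK N kA kB : ℂ) • ρE N kA kB)) := by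
    intro N
    have hper := perN_main (PrK N) (hPrK N) (ρE N) (hρEpos N) (hρEtr N)
      ((2:ℝ) ^ N)⁻¹ (by positivity)
    have harg : ρideal N - ρfin N
        = ((((2:ℝ) ^ N)⁻¹ : ℝ) : ℂ) • (∑ k : Key N,
              (single (k,k) (k,k) (1:ℂ) : Matrix (Key N × Key N) (Key N × Key N) ℂ)
              ⊗ₖ (∑ a, ∑ b, (PrK N a b : ℂ) • ρE N a b))
          - ∑ a, ∑ b, (PrK N a b : ℂ) •
              ((single (a,b) (a,b) (1:ℂ) : Matrix (Key N × Key N) (Key N × Key N) ℂ) ⊗ₖ ρE N a b) := by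
      rw [hρideal N, hρfin N, hcast2 N]
      rfl
    rw [harg, hargD N]
    have h2 := mul_le_mul_of_nonneg_left hper (hPrN N)
    ring_nf at h2 ⊢
    linarith [h2]
  have he0 : ∀ N, (0:ℝ) ≤ (∑ kA, ∑ kB, if kA ≠ kB then PrK N kA kB else 0) := by
    intro N
    refine Finset.sum_nonneg fun a _ => Finset.sum_nonneg fun b _ => ?_
    by_cases h : a ≠ b
    · rw [if_pos h]; exact hPrK N a b
    · rw [if_neg h]
  have he1 : ∀ N, (∑ kA, ∑ kB, if kA ≠ kB then PrK N kA kB else 0) ≤ 1 := by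
    intro N
    rw [← hPrK1 N]
    refine Finset.sum_le_sum fun a _ => Finset.sum_le_sum fun b _ => ?_
    by_cases h : a ≠ b
    · rw [if_pos h]
    · rw [if_neg h]; exact hPrK N a b
  have hd2 : ∀ N, traceNorm ((∑ kA, ∑ kB, (PrK N kA kB : ℂ) • ((ketbra kA kA : Matrix (Key N) (Key N) ℂ) ⊗ₖ ρE N kA kB)) -
        ((2 : ℂ) ^ N)⁻¹ • ∑ k : Key N,
          (ketbra k k : Matrix (Key N) (Key N) ℂ) ⊗ₖ (∑ kA, ∑ kB, (PrK N kA kB : ℂ) • ρE N kA kB)) ≤ 2 := by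
    intro N
    rw [hargD N]
    exact perN_bound (PrK N) (hPrK N) (hPrK1 N) (ρE N) (hρEpos N) (hρEtr N)
      ((2:ℝ) ^ N)⁻¹ (by positivity) (hcard N)
  have S1 : Summable (fun N => PrN N * (∑ kA, ∑ kB, if kA ≠ kB then PrK N kA kB else 0)) :=
    Summable.of_nonneg_of_le (fun N => mul_nonneg (hPrN N) (he0 N))
      (fun N => mul_le_of_le_one_right (hPrN N) (he1 N)) hPsum
  have S2 : Summable (fun N => PrN N * traceNorm ((∑ kA, ∑ kB, (PrK N kA kB : ℂ) • ((ketbra kA kA : Matrix (Key N) (Key N) ℂ) ⊗ₖ ρE N kA kB)) -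
        ((2 : ℂ) ^ N)⁻¹ • ∑ k : Key N,
          (ketbra k k : Matrix (Key N) (Key N) ℂ) ⊗ₖ (∑ kA, ∑ kB, (PrK N kA kB : ℂ) • ρE N kA kB))) := by
    refine Summable.of_nonneg_of_le (fun N => mul_nonneg (hPrN N) (traceNorm_nonneg _))
      (fun N => ?_) (hPsum.mul_left 2)
    calc PrN N * traceNorm ((∑ kA, ∑ kB, (PrK N kA kB : ℂ) • ((ketbra kA kA : Matrix (Key N) (Key N) ℂ) ⊗ₖ ρE N kA kB)) -
        ((2 : ℂ) ^ N)⁻¹ • ∑ k : Key N,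
          (ketbra k k : Matrix (Key N) (Key N) ℂ) ⊗ₖ (∑ kA, ∑ kB, (PrK N kA kB : ℂ) • ρE N kA kB)) ≤ PrN N * 2 :=
          mul_le_mul_of_nonneg_left (hd2 N) (hPrN N)
      _ = 2 * PrN N := by ring
  have S3 : Summable (fun N => 2 * (PrN N * (∑ kA, ∑ kB, if kA ≠ kB then PrK N kA kB else 0))
      + PrN N * traceNorm ((∑ kA, ∑ kB, (PrK N kA kB : ℂ) • ((ketbra kA kA : Matrix (Key N) (Key N) ℂ) ⊗ₖ ρE N kA kB)) -
        ((2 : ℂ) ^ N)⁻¹ • ∑ k : Key N,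
          (ketbra k k : Matrix (Key N) (Key N) ℂ) ⊗ₖ (∑ kA, ∑ kB, (PrK N kA kB : ℂ) • ρE N kA kB))) := (S1.mul_left 2).add S2
  have S0 : Summable (fun N => PrN N * traceNorm (ρideal N - ρfin N)) :=
    Summable.of_nonneg_of_le (fun N => mul_nonneg (hPrN N) (traceNorm_nonneg _)) hkey S3
  have hts : (∑' N, PrN N * traceNorm (ρideal N - ρfin N))
      ≤ ∑' N, (2 * (PrN N * (∑ kA, ∑ kB, if kA ≠ kB then PrK N kA kB else 0)) + PrN N * traceNorm ((∑ kA, ∑ kB, (PrK N kA kB : ℂ) • ((ketbra kA kA : Matrix (Key N) (Key N) ℂ) ⊗ₖ ρE N kA kB)) -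
        ((2 : ℂ) ^ N)⁻¹ • ∑ k : Key N,
          (ketbra k k : Matrix (Key N) (Key N) ℂ) ⊗ₖ (∑ kA, ∑ kB, (PrK N kA kB : ℂ) • ρE N kA kB))) :=
    Summable.tsum_le_tsum hkey S0 S3
  have hsplit : (∑' N, (2 * (PrN N * (∑ kA, ∑ kB, if kA ≠ kB then PrK N kA kB else 0)) + PrN N * traceNorm ((∑ kA, ∑ kB, (PrK N kA kB : ℂ) • ((ketbra kA kA : Matrix (Key N) (Key N) ℂ) ⊗ₖ ρE N kA kB)) -
        ((2 : ℂ) ^ N)⁻¹ • ∑ k : Key N,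
          (ketbra k k : Matrix (Key N) (Key N) ℂ) ⊗ₖ (∑ kA, ∑ kB, (PrK N kA kB : ℂ) • ρE N kA kB))))
      = 2 * (∑' N, PrN N * (∑ kA, ∑ kB, if kA ≠ kB then PrK N kA kB else 0)) + ∑' N, PrN N * traceNorm ((∑ kA, ∑ kB, (PrK N kA kB : ℂ) • ((ketbra kA kA : Matrix (Key N) (Key N) ℂ) ⊗ₖ ρE N kA kB)) -
        ((2 : ℂ) ^ N)⁻¹ • ∑ k : Key N,
          (ketbra k k : Matrix (Key N) (Key N) ℂ) ⊗ₖ (∑ kA, ∑ kB, (PrK N kA kB : ℂ) • ρE N kA kB)) := by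
    rw [Summable.tsum_add (S1.mul_left 2) S2, tsum_mul_left]
  have h2s : (∑' N, PrN N * traceNorm ((∑ kA, ∑ kB, (PrK N kA kB : ℂ) • ((ketbra kA kA : Matrix (Key N) (Key N) ℂ) ⊗ₖ ρE N kA kB)) -
        ((2 : ℂ) ^ N)⁻¹ • ∑ k : Key N,
          (ketbra k k : Matrix (Key N) (Key N) ℂ) ⊗ₖ (∑ kA, ∑ kB, (PrK N kA kB : ℂ) • ρE N kA kB))) ≤ 2 * εs := by linarith [hsecret]
  have h1s : (∑' N, PrN N * (∑ kA, ∑ kB, if kA ≠ kB then PrK N kA kB else 0)) ≤ εc := hcorrect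
  calc (1/2) * ∑' N, PrN N * traceNorm (ρideal N - ρfin N)
      ≤ (1/2) * (2 * (∑' N, PrN N * (∑ kA, ∑ kB, if kA ≠ kB then PrK N kA kB else 0)) + ∑' N, PrN N * traceNorm ((∑ kA, ∑ kB, (PrK N kA kB : ℂ) • ((ketbra kA kA : Matrix (Key N) (Key N) ℂ) ⊗ₖ ρE N kA kB)) -
        ((2 : ℂ) ^ N)⁻¹ • ∑ k : Key N,
          (ketbra k k : Matrix (Key N) (Key N) ℂ) ⊗ₖ (∑ kA, ∑ kB, (PrK N kA kB : ℂ) • ρE N kA kB))) := by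
        rw [← hsplit]
        linarith [hts]
    _ ≤ εc + εs := by linarith
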